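/- For the cycle C_n (n ≥ 3), any set of n − 2 consecutive vertices of C_n is a completion set of C_n; that is, if W consists of n − 2 consecutive vertices of C_n, then (C_n)_W is a complete graph. -/

import Mathlib

open MvPolynomial

/-- A vertex `v` is a *free* vertex of `G` if the induced subgraph of `G` on the
neighbourhood `N_G(v)` is complete. -/
def IsFreeVertex {V : Type} (G : SimpleGraph V) (v : V) : Prop :=
  ∀ u ∈ G.neighborSet v, ∀ w ∈ G.neighborSet v, u ≠ w → G.Adj u w

/-- `f(G)`: the number of free vertices of `G`. -/
noncomputable def freeCount {V : Type} (G : SimpleGraph V) : ℕ :=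
  Set.ncard {v | IsFreeVertex G v}

/-- `i(G)`: the number of isolated vertices of `G`. -/
noncomputable def isolatedCount {V : Type} (G : SimpleGraph V) : ℕ :=
  Set.ncard {v | ∀ u, ¬ G.Adj v u}

/-- The diameter of a connected component `c` of `G`: the maximal distance in `G` between
two vertices of `c`. -/
noncomputable def compDiam {V : Type} (G : SimpleGraph V) (c : G.ConnectedComponent) : ℕ :=
  sSup {d | ∃ u w : V, G.connectedComponentMk u = c ∧ G.connectedComponentMk w = c ∧
    G.dist u w = d}

/-- `d(G) = i(G) + Σᵢ diam(Gᵢ)`: the number of isolated vertices of `G` plus the sum of the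
diameters of the connected components of `G`. -/
noncomputable def dVal {V : Type} (G : SimpleGraph V) : ℕ :=
  isolatedCount G + ∑ᶠ c : G.ConnectedComponent, compDiam G c

/-- `t(G)`: the number of connected components of `G`. -/
noncomputable def numComponents {V : Type} (G : SimpleGraph V) : ℕ :=
  Nat.card G.ConnectedComponent

/-- The vertex-connectivity `κ(G)`: the minimum cardinality of a set `T` of vertices such
that `G − T` is disconnected (i.e. has two vertices not joined by any path). -/
noncomputable def kappaVal {V : Type} (G : SimpleGraph V) : ℕ :=
  sInf {r | ∃ T : Set V, T.ncard = r ∧ ¬ (G.induce Tᶜ).Preconnected}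

/-- `G_v`: the graph with `V(G_v) = V(G)` and
`E(G_v) = E(G) ∪ {{u,w} : u, w ∈ N_G(v)}`. -/
def cliqueCompletion {V : Type} (G : SimpleGraph V) (v : V) : SimpleGraph V where
  Adj u w := G.Adj u w ∨ (u ≠ w ∧ G.Adj v u ∧ G.Adj v w)
  symm := by
    constructor
    intro a b h
    rcases h with h | ⟨hne, h1, h2⟩
    · exact Or.inl h.symm
    · exact Or.inr ⟨hne.symm, h2, h1⟩
  loopless := by
    constructor
    intro a h
    rcases h with h | ⟨hne, _, _⟩
    · exact G.irrefl h
    · exact hne rfl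

/-- `G − v`: the induced subgraph of `G` on `V(G) ∖ {v}`. -/
def deleteVertex {V : Type} (G : SimpleGraph V) (v : V) : SimpleGraph {u : V | u ≠ v} :=
  G.induce {u : V | u ≠ v}

/-- `G` is a disjoint union of complete graphs, i.e. every connected component of `G`
is a complete graph. -/
def IsDisjointUnionOfCompletes {V : Type} (G : SimpleGraph V) : Prop :=
  ∀ u w : V, G.Reachable u w → u = w ∨ G.Adj u w

/-- The generalized binomial edge ideal `J_{K_m,G} ⊆ S = K[x_{ij} : i ∈ [m], j ∈ [n]]` of a
graph `G` on `[n]`: the ideal generated by the 2-minors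
`x_{ik}x_{jl} − x_{il}x_{jk}` for `1 ≤ i < j ≤ m` and edges `{k,l}` of `G` with `k < l`. -/
noncomputable def genBinomialEdgeIdeal (K : Type) [Field K] (m n : ℕ)
    (G : SimpleGraph (Fin n)) : Ideal (MvPolynomial (Fin m × Fin n) K) :=
  Ideal.span {f | ∃ (i j : Fin m) (k l : Fin n), i < j ∧ k < l ∧ G.Adj k l ∧
    f = X (i, k) * X (j, l) - X (i, l) * X (j, k)}

/-- The depth of `S/J` with respect to the maximal homogeneous ideal
`𝔪 = (x_s : s ∈ σ)` of the polynomial ring `S = K[x_s : s ∈ σ]`: the supremum of the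
lengths of `S/J`-regular sequences consisting of elements of `𝔪`. -/
noncomputable def quotDepth (K : Type) [Field K] {σ : Type} (J : Ideal (MvPolynomial σ K)) : ℕ :=
  sSup {r | ∃ rs : List (MvPolynomial σ K), rs.length = r ∧
    (∀ f ∈ rs, f ∈ Ideal.span (Set.range (X : σ → MvPolynomial σ K))) ∧
    RingTheory.Sequence.IsRegular (MvPolynomial σ K ⧸ J) rs}

/-- The iterated clique-completion `G_W` of `G` at the vertices of a list `W`:
`G_[] = G` and `G_(v :: l) = (G_v)_l`. -/
def cliqueCompletionIter {V : Type} (G : SimpleGraph V) : List V → SimpleGraph V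
  | [] => G
  | v :: l => cliqueCompletionIter (cliqueCompletion G v) l

lemma cliqueCompletionIter_append {V : Type} (G : SimpleGraph V) (l : List V) (v : V) :
    cliqueCompletionIter G (l ++ [v]) = cliqueCompletion (cliqueCompletionIter G l) v := by
  induction l generalizing G with
  | nil => rfl
  | cons w l ih => simp [cliqueCompletionIter, ih]

lemma le_cliqueCompletion {V : Type} (G : SimpleGraph V) (v : V) :
    G ≤ cliqueCompletion G v := by
  intro u w h
  exact Or.inl h

lemma le_cliqueCompletionIter {V : Type} (G : SimpleGraph V) (l : List V) :
    G ≤ cliqueCompletionIter G l := by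
  induction l generalizing G with
  | nil => exact le_refl _
  | cons v l ih => exact le_trans (le_cliqueCompletion G v) (ih _)

open Fin.NatCast Fin.CommRing

lemma cycle_adj_succ {n : ℕ} [NeZero n] (hn : 3 ≤ n) (x : Fin n) :
    (SimpleGraph.cycleGraph n).Adj x (x + 1) := by
  rw [SimpleGraph.cycleGraph_adj']
  right
  have : x + 1 - x = 1 := by ring
  rw [this, Fin.val_one']
  exact Nat.mod_eq_of_lt (by omega)

/-- any `n − 2` consecutive vertices of the cycle `C_n` (`n ≥ 3`) form a
completion set; indeed the iterated clique-completion of `C_n` at the consecutive vertices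
`a, a+1, …, a+n−3` (mod `n`) is a complete graph. -/
theorem consecutive_completion_set (n : ℕ) (hn : 3 ≤ n) (a : Fin n) :
    cliqueCompletionIter (SimpleGraph.cycleGraph n)
      ((List.range (n - 2)).map
        (fun i => (⟨(a.val + i) % n, Nat.mod_lt _ (by omega)⟩ : Fin n))) = ⊤ := by
  haveI : NeZero n := ⟨by omega⟩
  -- rewrite the list as `map (fun i => a + ↑i) (range (n-2))`
  have hlist : ((List.range (n - 2)).map
      (fun i => (⟨(a.val + i) % n, Nat.mod_lt _ (by omega)⟩ : Fin n)))
      = (List.range (n - 2)).map (fun i : ℕ => a + (i : Fin n)) := by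
    apply List.map_congr_left
    intro i _
    apply Fin.ext
    simp only [Fin.add_def, Fin.val_natCast]
    conv_lhs => rw [Nat.add_mod, Nat.mod_eq_of_lt a.isLt]
  rw [hlist]
  -- the "clique vertex" function
  set h : ℕ → Fin n := fun t => a - 1 + (t : Fin n) with hh
  have hinj : ∀ s t : ℕ, s < n → t < n → h s = h t → s = t := by
    intro s t hs ht heq
    have : (s : Fin n) = (t : Fin n) := by
      have := add_left_cancel heq
      exact this
    have := congrArg Fin.val this
    simpa [Fin.val_natCast, Nat.mod_eq_of_lt hs, Nat.mod_eq_of_lt ht] using this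
  have hv : ∀ k : ℕ, a + (k : Fin n) = h (k + 1) := by
    intro k
    simp only [hh, Nat.cast_add, Nat.cast_one]
    ring
  -- main induction
  have key : ∀ k, k ≤ n - 2 → ∀ s t : ℕ, s ≤ k + 1 → t ≤ k + 1 → s ≠ t →
      (cliqueCompletionIter (SimpleGraph.cycleGraph n)
        ((List.range k).map (fun i : ℕ => a + (i : Fin n)))).Adj (h s) (h t) := by
    intro k
    induction k with
    | zero =>
      intro _ s t hs ht hst
      simp only [List.range_zero, List.map_nil, cliqueCompletionIter]
      have hbase : (SimpleGraph.cycleGraph n).Adj (h 0) (h 1) := by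
        have : h 1 = h 0 + 1 := by simp [hh]
        rw [this]
        exact cycle_adj_succ hn _
      interval_cases s <;> interval_cases t <;>
        first | omega | exact hbase | exact hbase.symm
    | succ k ih =>
      intro hk s t hs ht hst
      have hk' : k ≤ n - 2 := by omega
      rw [List.range_succ, List.map_append, List.map_singleton, cliqueCompletionIter_append]
      have hne : h s ≠ h t := fun heq => hst (hinj s t (by omega) (by omega) heq)
      have hcyc : (SimpleGraph.cycleGraph n).Adj (h (k + 1)) (h (k + 2)) := by
        have : h (k + 2) = h (k + 1) + 1 := by
          simp only [hh]
          push_cast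
          ring
        rw [this]
        exact cycle_adj_succ hn _
      have hGk := le_cliqueCompletionIter (SimpleGraph.cycleGraph n)
        ((List.range k).map (fun i : ℕ => a + (i : Fin n)))
      rw [hv k]
      -- adjacency of h (k+1) with h s for s ≤ k+1, s ≠ k+1 in G_k
      have hadj : ∀ s : ℕ, s ≤ k + 1 → s ≠ k + 1 →
          (cliqueCompletionIter (SimpleGraph.cycleGraph n)
            ((List.range k).map (fun i : ℕ => a + (i : Fin n)))).Adj (h (k + 1)) (h s) :=
        fun s hs hs' => ih hk' (k + 1) s le_rfl (by omega) (Ne.symm hs')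
      by_cases hs2 : s = k + 2
      · by_cases ht2 : t = k + 1
        · subst hs2; subst ht2
          exact Or.inl (hGk hcyc.symm)
        · subst hs2
          exact Or.inr ⟨hne, hGk hcyc, hadj t (by omega) ht2⟩
      · by_cases ht2 : t = k + 2
        · subst ht2
          by_cases hs3 : s = k + 1
          · subst hs3; exact Or.inl (hGk hcyc)
          · exact Or.inr ⟨hne, hadj s (by omega) hs3, hGk hcyc⟩
        · exact Or.inl (ih hk' s t (by omega) (by omega) hst)
  -- conclude
  ext u w
  simp only [SimpleGraph.top_adj]
  constructor
  · exact fun hadj => hadj.ne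
  · intro huw
    have hu : h ((u - (a - 1)).val) = u := by
      simp [hh, Fin.cast_val_eq_self]
    have hw : h ((w - (a - 1)).val) = w := by
      simp [hh, Fin.cast_val_eq_self]
    have hst : (u - (a - 1)).val ≠ (w - (a - 1)).val := by
      intro heq
      apply huw
      rw [← hu, ← hw, heq]
    have := key (n - 2) le_rfl (u - (a - 1)).val (w - (a - 1)).val
      (by have := (u - (a - 1)).isLt; omega) (by have := (w - (a - 1)).isLt; omega) hst
    rwa [hu, hw] at this
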